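/- If a likelihood ordering on quantum events satisfies transitivity, dominance, separation, and equivalence, and the set of measurements is weight-rich, then an event E is null with respect to M if and only if W_M(E) = 0. -/

import Mathlib

/-- A quantum measurement: a finite outcome set with an additive,
normalized, nonnegative weight function on events (subsets of outcomes). -/
structure Measurement where
  S : Finset ℕ
  W : Finset ℕ → ℝ
  nonneg : ∀ E, 0 ≤ W E
  emptyW : W ∅ = 0
  totalW : W S = 1
  addW : ∀ E F : Finset ℕ, E ⊆ S → F ⊆ S → Disjoint E F → W (E ∪ F) = W E + W F

/-- A likelihood ordering on event–measurement pairs. -/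
abbrev LOrder := (Finset ℕ × Measurement) → (Finset ℕ × Measurement) → Prop

/-- E|M ≃ F|N : both directions of the likelihood ordering hold. -/
def lequiv (R : LOrder) (a b : Finset ℕ × Measurement) : Prop := R a b ∧ R b a

/-- E is null with respect to M. -/
def IsNull (R : LOrder) (E : Finset ℕ) (M : Measurement) : Prop := lequiv R (E, M) (∅, M)

/-- Transitivity axiom. -/
def TransAx (R : LOrder) : Prop := ∀ a b c, R a b → R b c → R a c

/-- Dominance axiom. -/
def DominanceAx (R : LOrder) : Prop :=
  ∀ (M : Measurement) (E F : Finset ℕ), E ⊆ F → F ⊆ M.S →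
    R (F, M) (E, M) ∧ (lequiv R (F, M) (E, M) ↔ IsNull R (F \ E) M)

/-- Separation axiom: some event is not null. -/
def SeparationAx (R : LOrder) : Prop :=
  ∃ (E : Finset ℕ) (M : Measurement), E ⊆ M.S ∧ ¬ IsNull R E M

/-- Equivalence axiom: equal weight implies equal likelihood. -/
def EquivalenceAx (R : LOrder) : Prop :=
  ∀ (M N : Measurement) (E F : Finset ℕ), E ⊆ M.S → F ⊆ N.S →
    M.W E = N.W F → lequiv R (E, M) (F, N)

/-- Weight-richness: every finite list of positive reals summing to 1 is
realized as the singleton-outcome weights of some measurement. -/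
def Rich : Prop :=
  ∀ (n : ℕ) (w : Fin n → ℝ), (∀ i, 0 < w i) → (∑ i, w i) = 1 →
    ∃ (M : Measurement) (e : Fin n ↪ ℕ),
      M.S = Finset.univ.map e ∧ ∀ i, M.W {e i} = w i

/-- `Pr` represents the likelihood ordering `R`. -/
def Represents (R : LOrder) (Pr : Finset ℕ × Measurement → ℝ) : Prop :=
  (∀ M : Measurement, Pr (∅, M) = 0) ∧
  (∀ M : Measurement, Pr (M.S, M) = 1) ∧
  (∀ (M : Measurement) (E F : Finset ℕ), E ⊆ M.S → F ⊆ M.S → Disjoint E F →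
      Pr (E ∪ F, M) = Pr (E, M) + Pr (F, M)) ∧
  (∀ a b : Finset ℕ × Measurement, a.1 ⊆ a.2.S → b.1 ⊆ b.2.S →
      (Pr a ≥ Pr b ↔ R a b))

-- auxiliary lemmas
lemma wmono (M : Measurement) {E : Finset ℕ} (h : E ⊆ M.S) : M.W E ≤ 1 := by
  have h2 := M.addW E (M.S \ E) h Finset.sdiff_subset Finset.disjoint_sdiff
  rw [Finset.union_sdiff_of_subset h, M.totalW] at h2
  nlinarith [M.nonneg (M.S \ E)]

lemma null_of_zero (R : LOrder) (hE : EquivalenceAx R) {N : Measurement} {G : Finset ℕ}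
    (hG : G ⊆ N.S) (h0 : N.W G = 0) : IsNull R G N :=
  hE N N G ∅ hG (Finset.empty_subset _) (by rw [N.emptyW, h0])

lemma transfer (R : LOrder) (hT : TransAx R) (hE : EquivalenceAx R)
    {N : Measurement} {G : Finset ℕ} (hGN : G ⊆ N.S) (hnull : IsNull R G N)
    {P : Measurement} {H : Finset ℕ} (hHP : H ⊆ P.S) (hw : N.W G = P.W H) :
    IsNull R H P := by
  have e1 : lequiv R (H, P) (G, N) := hE P N H G hHP hGN hw.symm
  have e3 : lequiv R ((∅ : Finset ℕ), N) ((∅ : Finset ℕ), P) :=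
    hE N P ∅ ∅ (Finset.empty_subset _) (Finset.empty_subset _) (by rw [N.emptyW, P.emptyW])
  exact ⟨hT _ _ _ (hT _ _ _ e1.1 hnull.1) e3.1, hT _ _ _ e3.2 (hT _ _ _ hnull.2 e1.2)⟩

lemma null_subset (R : LOrder) (hT : TransAx R) (hD : DominanceAx R)
    {N : Measurement} {F G : Finset ℕ} (hFG : F ⊆ G) (hGN : G ⊆ N.S)
    (hG : IsNull R G N) : IsNull R F N := by
  have h1 := (hD N F G hFG hGN).1
  have h2 := (hD N ∅ F (Finset.empty_subset _) (hFG.trans hGN)).1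
  exact ⟨h2, hT _ _ _ hG.2 h1⟩

lemma null_union (R : LOrder) (hT : TransAx R) (hD : DominanceAx R)
    {N : Measurement} {E F : Finset ℕ} (hEN : E ⊆ N.S) (hFN : F ⊆ N.S)
    (hd : Disjoint E F) (hE : IsNull R E N) (hF : IsNull R F N) :
    IsNull R (E ∪ F) N := by
  have hU : E ∪ F ⊆ N.S := Finset.union_subset hEN hFN
  have hiff := (hD N E (E ∪ F) Finset.subset_union_left hU).2
  have hsd : (E ∪ F) \ E = F := by
    rw [Finset.union_sdiff_left, Finset.sdiff_eq_self_iff_disjoint]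
    exact hd.symm
  have leq : lequiv R (E ∪ F, N) (E, N) := hiff.mpr (by rw [hsd]; exact hF)
  exact ⟨hT _ _ _ leq.1 hE.1, hT _ _ _ hE.2 leq.2⟩

lemma mem_rich {n : ℕ} {P : Measurement} {e : Fin n ↪ ℕ}
    (hS : P.S = Finset.univ.map e) (i : Fin n) : ({e i} : Finset ℕ) ⊆ P.S := by
  rw [hS, Finset.singleton_subset_iff]
  exact Finset.mem_map_of_mem e (Finset.mem_univ i)

/-- Key step: any event of positive weight at most `M.W E` is null, given `E` null. -/
lemma key1 (R : LOrder) (hT : TransAx R) (hD : DominanceAx R) (hE : EquivalenceAx R)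
    (hR : Rich) {M : Measurement} {E : Finset ℕ} (hEM : E ⊆ M.S)
    (hnull : IsNull R E M) (hw : 0 < M.W E) :
    ∀ (N : Measurement) (G : Finset ℕ), G ⊆ N.S → N.W G ≤ M.W E → IsNull R G N := by
  intro N G hGN hle
  set w := M.W E with hwdef
  set u := N.W G with hudef
  rcases eq_or_lt_of_le (N.nonneg G) with h0 | hupos
  · exact null_of_zero R hE hGN ((hudef ▸ h0).symm)
  rcases eq_or_lt_of_le hle with heq | hlt
  · exact transfer R hT hE hEM hnull hGN heq.symm
  have hw1 : w ≤ 1 := wmono M hEM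
  rcases eq_or_lt_of_le hw1 with hwe | hwl
  · -- w = 1 : two outcomes u, 1-u
    obtain ⟨P, e, hS, hW⟩ := hR 2 ![u, 1 - u]
      (by intro i; fin_cases i <;> simp <;> linarith)
      (by simp [Fin.sum_univ_two])
    have hPS : IsNull R P.S P :=
      transfer R hT hE hEM hnull (subset_refl _) (by rw [P.totalW, ← hwe])
    have h0 : IsNull R {e 0} P :=
      null_subset R hT hD (mem_rich hS 0) (subset_refl _) hPS
    exact transfer R hT hE (mem_rich hS 0) h0 hGN (by rw [hW 0]; simp; exact hudef)
  · -- w < 1 : three outcomes u, w-u, 1-w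
    obtain ⟨P, e, hS, hW⟩ := hR 3 ![u, w - u, 1 - w]
      (by intro i; fin_cases i <;> simp <;> linarith)
      (by simp [Fin.sum_univ_three])
    have hne : ({e 0} : Finset ℕ) ≠ ({e 1} : Finset ℕ) → True := fun _ => trivial
    have hdisj : Disjoint ({e 0} : Finset ℕ) {e 1} := by
      rw [Finset.disjoint_singleton]
      intro h
      exact absurd (e.injective h) (by decide)
    have hWA : P.W ({e 0} ∪ {e 1}) = w := by
      rw [P.addW _ _ (mem_rich hS 0) (mem_rich hS 1) hdisj, hW 0, hW 1]; simp
    have hA : IsNull R ({e 0} ∪ {e 1}) P :=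
      transfer R hT hE hEM hnull
        (Finset.union_subset (mem_rich hS 0) (mem_rich hS 1)) (by rw [hWA])
    have h0 : IsNull R {e 0} P :=
      null_subset R hT hD Finset.subset_union_left
        (Finset.union_subset (mem_rich hS 0) (mem_rich hS 1)) hA
    exact transfer R hT hE (mem_rich hS 0) h0 hGN (by rw [hW 0]; simp; exact hudef)

/-- By induction: any event of weight at most `(n+1) * M.W E` is null. -/
lemma keyn (R : LOrder) (hT : TransAx R) (hD : DominanceAx R) (hE : EquivalenceAx R)
    (hR : Rich) {M : Measurement} {E : Finset ℕ} (hEM : E ⊆ M.S)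
    (hnull : IsNull R E M) (hw : 0 < M.W E) :
    ∀ (n : ℕ) (N : Measurement) (G : Finset ℕ), G ⊆ N.S →
      N.W G ≤ (n + 1) * M.W E → IsNull R G N := by
  intro n
  induction n with
  | zero =>
    intro N G hGN hle
    exact key1 R hT hD hE hR hEM hnull hw N G hGN (by push_cast at hle; linarith)
  | succ n ih =>
    intro N G hGN hle
    set w := M.W E with hwdef
    set u := N.W G with hudef
    rcases le_or_gt u ((n + 1) * w) with h | h
    · exact ih N G hGN h
    have hu1 : u ≤ 1 := wmono N hGN
    have hupos : 0 < u := lt_of_le_of_lt (by positivity) h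
    have huw : w < u := lt_of_le_of_lt (by nlinarith) h
    have hle' : u - w ≤ (n + 1) * w := by push_cast at hle; linarith
    rcases eq_or_lt_of_le hu1 with hue | hul
    · -- u = 1 : two outcomes u - w, w
      obtain ⟨P, e, hS, hW⟩ := hR 2 ![u - w, w]
        (by intro i; fin_cases i <;> simp <;> linarith)
        (by simp [Fin.sum_univ_two]; linarith)
      have hdisj : Disjoint ({e 0} : Finset ℕ) {e 1} := by
        rw [Finset.disjoint_singleton]
        intro hq
        exact absurd (e.injective hq) (by decide)
      have h0 : IsNull R {e 0} P :=
        ih P {e 0} (mem_rich hS 0) (by rw [hW 0]; simpa using hle')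
      have h1 : IsNull R {e 1} P :=
        key1 R hT hD hE hR hEM hnull hw P {e 1} (mem_rich hS 1) (by rw [hW 1]; simp; exact hwdef.le)
      have hU : IsNull R ({e 0} ∪ {e 1}) P :=
        null_union R hT hD (mem_rich hS 0) (mem_rich hS 1) hdisj h0 h1
      have hWU : P.W ({e 0} ∪ {e 1}) = u := by
        rw [P.addW _ _ (mem_rich hS 0) (mem_rich hS 1) hdisj, hW 0, hW 1]; simp
      exact transfer R hT hE (Finset.union_subset (mem_rich hS 0) (mem_rich hS 1)) hU hGN
        (by rw [hWU])
    · -- u < 1 : three outcomes u - w, w, 1 - u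
      obtain ⟨P, e, hS, hW⟩ := hR 3 ![u - w, w, 1 - u]
        (by intro i; fin_cases i <;> simp <;> linarith)
        (by simp [Fin.sum_univ_three])
      have hdisj : Disjoint ({e 0} : Finset ℕ) {e 1} := by
        rw [Finset.disjoint_singleton]
        intro hq
        exact absurd (e.injective hq) (by decide)
      have h0 : IsNull R {e 0} P :=
        ih P {e 0} (mem_rich hS 0) (by rw [hW 0]; simpa using hle')
      have h1 : IsNull R {e 1} P :=
        key1 R hT hD hE hR hEM hnull hw P {e 1} (mem_rich hS 1) (by rw [hW 1]; simp; exact hwdef.le)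
      have hU : IsNull R ({e 0} ∪ {e 1}) P :=
        null_union R hT hD (mem_rich hS 0) (mem_rich hS 1) hdisj h0 h1
      have hWU : P.W ({e 0} ∪ {e 1}) = u := by
        rw [P.addW _ _ (mem_rich hS 0) (mem_rich hS 1) hdisj, hW 0, hW 1]; simp
      exact transfer R hT hE (Finset.union_subset (mem_rich hS 0) (mem_rich hS 1)) hU hGN
        (by rw [hWU])

/-- Lemma 2: an event is null iff it has weight zero. -/
theorem stmt1 (R : LOrder) (hT : TransAx R) (hD : DominanceAx R)
    (hS : SeparationAx R) (hE : EquivalenceAx R) (hR : Rich)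
    (M : Measurement) (E : Finset ℕ) (hEM : E ⊆ M.S) :
    IsNull R E M ↔ M.W E = 0 := by
  constructor
  · intro hnull
    by_contra h0
    have hw : 0 < M.W E := lt_of_le_of_ne (M.nonneg E) (Ne.symm h0)
    obtain ⟨E', M', hE'M', hnn⟩ := hS
    obtain ⟨n, hn⟩ := exists_nat_ge (1 / M.W E)
    have hn1 : 1 ≤ (n + 1 : ℝ) * M.W E := by
      have : 1 / M.W E * M.W E ≤ (n : ℝ) * M.W E :=
        mul_le_mul_of_nonneg_right hn (le_of_lt hw)
      rw [one_div_mul_cancel (ne_of_gt hw)] at this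
      nlinarith
    exact hnn (keyn R hT hD hE hR hEM hnull hw n M' E' hE'M'
      (le_trans (wmono M' hE'M') (by push_cast; linarith)))
  · intro h0
    exact null_of_zero R hE hEM h0
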